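/- Let η_0,...,η_{N−1} > 0 and μ > 0. Then ∏_{k=0}^{N−1} (1 + 2η_k μ)^{−1} ≤ (1 + 2μ √(N / Σ_{k=0}^{N−1} 1/η_k²))^{−N}. -/

import Mathlib

/-- Jensen-type bound: the product of contraction factors is bounded by
`(1 + 2μ √(N / Σ 1/η_k²))^{-N}`. -/
theorem product_contraction_jensen (N : ℕ) (hN : 0 < N) (μ : ℝ) (hμ : 0 < μ)
    (η : ℕ → ℝ) (hη : ∀ k < N, 0 < η k) :
    ∏ k ∈ Finset.range N, (1 + 2 * η k * μ)⁻¹ ≤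
      ((1 + 2 * μ * Real.sqrt ((N : ℝ) / ∑ k ∈ Finset.range N, 1 / (η k) ^ 2))⁻¹) ^ N := by
  set s := Finset.range N with hs
  have hηpos : ∀ k ∈ s, 0 < η k := fun k hk => hη k (Finset.mem_range.mp hk)
  have hNpos : (0:ℝ) < N := Nat.cast_pos.mpr hN
  set w : ℝ := (N:ℝ)⁻¹ with hw
  have hwpos : 0 < w := inv_pos.mpr hNpos
  have hw' : ∑ _k ∈ s, w = 1 := by
    rw [Finset.sum_const, Finset.card_range, nsmul_eq_mul, hw]
    field_simp
  set S := ∑ k ∈ s, 1 / (η k) ^ 2 with hS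
  have hSpos : 0 < S := Finset.sum_pos
    (fun k hk => by have := hηpos k hk; positivity) ⟨0, Finset.mem_range.mpr hN⟩
  set G := ∏ k ∈ s, η k ^ w with hG
  have hGpos : 0 < G := Finset.prod_pos fun k hk => Real.rpow_pos_of_pos (hηpos k hk) w
  -- Step A: AM-GM gives (G^2)⁻¹ ≤ w * S
  have hAM : ∏ k ∈ s, (1 / (η k) ^ 2) ^ w ≤ ∑ k ∈ s, w * (1 / (η k) ^ 2) :=
    Real.geom_mean_le_arith_mean_weighted s (fun _ => w) (fun k => 1 / (η k) ^ 2)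
      (fun _ _ => le_of_lt hwpos) hw' (fun k hk => by positivity)
  have hprodinv : ∏ k ∈ s, (1 / (η k) ^ 2) ^ w = (G ^ 2)⁻¹ := by
    rw [hG, ← Finset.prod_pow, ← Finset.prod_inv_distrib]
    refine Finset.prod_congr rfl fun k hk => ?_
    have hk' := hηpos k hk
    have hsq : ((η k) ^ 2 : ℝ) ^ w = ((η k) ^ w) ^ 2 := by
      rw [← Real.rpow_natCast (η k) 2, ← Real.rpow_mul hk'.le, mul_comm,
        Real.rpow_mul hk'.le, Real.rpow_natCast]
    rw [one_div, Real.inv_rpow (by positivity), hsq]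
  have hA : (G ^ 2)⁻¹ ≤ w * S := by
    rw [← hprodinv, hS, Finset.mul_sum]; exact hAM
  have hsq : Real.sqrt ((N:ℝ) / S) ≤ G := by
    have h1 : (N:ℝ) / S ≤ G ^ 2 := by
      rw [div_le_iff₀ hSpos]
      have h2 : ((G ^ 2)⁻¹) * ((N:ℝ) * G ^ 2) ≤ (w * S) * ((N:ℝ) * G ^ 2) :=
        mul_le_mul_of_nonneg_right hA (by positivity)
      calc (N:ℝ) = ((G ^ 2)⁻¹) * ((N:ℝ) * G ^ 2) := by field_simp
        _ ≤ (w * S) * ((N:ℝ) * G ^ 2) := h2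
        _ = G ^ 2 * S := by rw [hw]; field_simp
    calc Real.sqrt ((N:ℝ) / S) ≤ Real.sqrt (G ^ 2) := Real.sqrt_le_sqrt h1
      _ = G := Real.sqrt_sq hGpos.le
  -- Step B: Huygens inequality
  set P := ∏ k ∈ s, (1 + 2 * η k * μ) with hP
  have hbase : ∀ k ∈ s, 0 < 1 + 2 * η k * μ := fun k hk => by
    have := hηpos k hk; positivity
  have hPpos : 0 < P := Finset.prod_pos hbase
  set Q := ∏ k ∈ s, ((1 + 2 * η k * μ)⁻¹) ^ w with hQ
  have hQpos : 0 < Q := Finset.prod_pos fun k hk =>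
    Real.rpow_pos_of_pos (inv_pos.mpr (hbase k hk)) w
  set A := ∏ k ∈ s, (2 * η k * μ) ^ w with hA2
  have hApos : 0 < A := Finset.prod_pos fun k hk =>
    Real.rpow_pos_of_pos (by have := hηpos k hk; positivity) w
  have h1 : Q ≤ ∑ k ∈ s, w * (1 + 2 * η k * μ)⁻¹ :=
    Real.geom_mean_le_arith_mean_weighted s (fun _ => w) _
      (fun _ _ => hwpos.le) hw' (fun k hk => (inv_pos.mpr (hbase k hk)).le)
  have h2 : ∏ k ∈ s, (2 * η k * μ * (1 + 2 * η k * μ)⁻¹) ^ w ≤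
      ∑ k ∈ s, w * (2 * η k * μ * (1 + 2 * η k * μ)⁻¹) :=
    Real.geom_mean_le_arith_mean_weighted s (fun _ => w) _
      (fun _ _ => hwpos.le) hw' (fun k hk => by
        have h := hηpos k hk; have h' := hbase k hk; positivity)
  have hsplit : ∏ k ∈ s, (2 * η k * μ * (1 + 2 * η k * μ)⁻¹) ^ w = A * Q := by
    rw [hA2, hQ, ← Finset.prod_mul_distrib]
    refine Finset.prod_congr rfl fun k hk => ?_
    rw [← Real.mul_rpow (by have := hηpos k hk; positivity) (inv_pos.mpr (hbase k hk)).le]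
  have hsumeq : (∑ k ∈ s, w * (1 + 2 * η k * μ)⁻¹) +
      (∑ k ∈ s, w * (2 * η k * μ * (1 + 2 * η k * μ)⁻¹)) = 1 := by
    rw [← Finset.sum_add_distrib]
    have key : ∀ k ∈ s, w * (1 + 2 * η k * μ)⁻¹ +
        w * (2 * η k * μ * (1 + 2 * η k * μ)⁻¹) = w := by
      intro k hk
      have h := (hbase k hk).ne'
      have heq : (1 + 2 * η k * μ)⁻¹ + 2 * η k * μ * (1 + 2 * η k * μ)⁻¹ = 1 := by
        field_simp
      rw [← mul_add, heq, mul_one]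
    rw [Finset.sum_congr rfl key, hw']
  have hHuy : Q * (1 + A) ≤ 1 := by
    have := add_le_add h1 h2
    rw [hsplit, hsumeq] at this
    nlinarith
  have hQP : Q = (P ^ w)⁻¹ := by
    rw [hQ, hP, ← Real.finset_prod_rpow s _ (fun k hk => (hbase k hk).le) w,
      ← Finset.prod_inv_distrib]
    refine Finset.prod_congr rfl fun k hk => ?_
    rw [Real.inv_rpow (hbase k hk).le]
  have hPw : 1 + A ≤ P ^ w := by
    have hPw0 : 0 < P ^ w := Real.rpow_pos_of_pos hPpos w
    rw [hQP] at hHuy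
    calc 1 + A = (P ^ w)⁻¹ * (1 + A) * (P ^ w) := by field_simp
      _ ≤ 1 * P ^ w := mul_le_mul_of_nonneg_right hHuy hPw0.le
      _ = P ^ w := one_mul _
  have hAval : A = 2 * μ * G := by
    rw [hA2, hG]
    have : ∀ k ∈ s, (2 * η k * μ) ^ w = (2*μ) ^ w * η k ^ w := fun k hk => by
      rw [← Real.mul_rpow (by positivity) (hηpos k hk).le]; ring_nf
    rw [Finset.prod_congr rfl this, Finset.prod_mul_distrib, Finset.prod_const,
      Finset.card_range, ← Real.rpow_natCast ((2*μ) ^ w) N, ← Real.rpow_mul (by positivity)]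
    rw [hw, inv_mul_cancel₀ hNpos.ne']
    simp
  -- Combine
  set T := 1 + 2 * μ * Real.sqrt ((N:ℝ) / S) with hT
  have hTpos : 0 < T := by
    have : 0 ≤ Real.sqrt ((N:ℝ) / S) := Real.sqrt_nonneg _
    rw [hT]; positivity
  have hTA : T ≤ 1 + A := by
    rw [hT, hAval]
    have := mul_le_mul_of_nonneg_left hsq (by positivity : (0:ℝ) ≤ 2 * μ)
    linarith
  have hTN : T ^ N ≤ P := by
    have h3 : T ^ N ≤ (P ^ w) ^ N :=
      pow_le_pow_left₀ hTpos.le (le_trans hTA hPw) N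
    have h4 : (P ^ w) ^ N = P := by
      rw [← Real.rpow_natCast (P ^ w) N, ← Real.rpow_mul hPpos.le, hw,
        inv_mul_cancel₀ hNpos.ne', Real.rpow_one]
    rwa [h4] at h3
  have hfinal : P⁻¹ ≤ (T ^ N)⁻¹ :=
    inv_anti₀ (by positivity) hTN
  rw [← Finset.prod_inv_distrib] at hfinal
  rw [inv_pow]
  exact hfinal
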